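/- For every fixed integer n ≥ 2, lim_{j→∞} (n+2^j−2)·(n+2^{j−1}−2)! / (2^{nj}·n!·(2^{j−1}−1)!) = 2^{1−n}/n!. -/

import Mathlib

open Real Filter Finset

lemma fact_prod_aux (a b : ℕ) :
    Nat.factorial (a + b) = Nat.factorial a * ∏ k ∈ Finset.range b, (a + 1 + k) := by
  induction b with
  | zero => simp
  | succ b ih =>
    rw [show a + (b+1) = (a+b)+1 from rfl, Nat.factorial_succ, ih,
      Finset.prod_range_succ]
    ring

/-- The squared `L²`-norms `‖φ_j‖² = (n+2^j−2)(n+2^{j−1}−2)!/(2^{nj} n! (2^{j−1}−1)!)` of the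
weighted scaling functions converge to `2^{1−n}/n!` as `j → ∞`. -/
theorem norm_scaling_function_limit (n : ℕ) (hn : 2 ≤ n) :
    Tendsto (fun j : ℕ =>
        (((n + 2 ^ j - 2) * Nat.factorial (n + 2 ^ (j - 1) - 2) : ℕ) : ℝ) /
          ((2 : ℝ) ^ (n * j) * (Nat.factorial n : ℝ) *
            (Nat.factorial (2 ^ (j - 1) - 1) : ℝ)))
      atTop (nhds ((2 : ℝ) ^ ((1 : ℤ) - (n : ℤ)) / (Nat.factorial n : ℝ))) := by
  set g : ℕ → ℝ := fun m =>
    (1 + ((n:ℝ)-2)/(2*m)) * (∏ k ∈ Finset.range (n-1), (1/2 + (k:ℝ)/(2*m))) /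
      (Nat.factorial n : ℝ) with hg
  -- limit of g
  have hinv : Tendsto (fun m : ℕ => ((m:ℝ))⁻¹) atTop (nhds 0) := by
    simpa [one_div] using (tendsto_one_div_atTop_nhds_zero_nat (𝕜 := ℝ))
  have hzero : ∀ c : ℝ, Tendsto (fun m : ℕ => c/(2*(m:ℝ))) atTop (nhds 0) := by
    intro c
    have h : (fun m : ℕ => c/(2*(m:ℝ))) = fun m : ℕ => (c/2) * ((m:ℝ))⁻¹ := by
      funext m
      rw [div_eq_mul_inv, div_eq_mul_inv, mul_inv]
      ring
    rw [h]
    simpa using hinv.const_mul (c/2)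
  have hgL : Tendsto g atTop
      (nhds ((1 + (0:ℝ)) * (∏ _k ∈ Finset.range (n-1), ((1:ℝ)/2 + 0)) /
        (Nat.factorial n : ℝ))) := by
    refine Tendsto.div_const ?_ _
    refine Tendsto.mul ?_ ?_
    · exact (hzero ((n:ℝ)-2)).const_add 1
    · exact tendsto_finset_prod _ (fun k _ => (hzero (k:ℝ)).const_add (1/2))
  have hLval : (1 + (0:ℝ)) * (∏ _k ∈ Finset.range (n-1), ((1:ℝ)/2 + 0)) /
      (Nat.factorial n : ℝ) = (2 : ℝ) ^ ((1 : ℤ) - (n : ℤ)) / (Nat.factorial n : ℝ) := by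
    congr 1
    have h1 : (1:ℤ) - (n:ℤ) = -((n-1 : ℕ) : ℤ) := by
      push_cast [Nat.cast_sub (by omega : 1 ≤ n)]; ring
    rw [h1, zpow_neg, zpow_natCast]
    simp [Finset.prod_const, inv_pow]
  rw [← hLval]
  have hcomp : Tendsto (fun j : ℕ => 2 ^ (j-1)) atTop atTop :=
    tendsto_atTop_mono (fun j => (Nat.lt_two_pow_self (n := j-1)).le) (tendsto_sub_atTop_nat 1)
  refine Tendsto.congr' ?_ (hgL.comp hcomp)
  filter_upwards [eventually_ge_atTop 1] with j hj
  set m : ℕ := 2 ^ (j-1) with hm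
  have hm1 : 1 ≤ m := Nat.one_le_two_pow
  have h2j : 2 ^ j = 2 * m := by
    rw [hm, ← pow_succ']
    congr 1
    omega
  have hmR : (0:ℝ) < (m:ℝ) := by exact_mod_cast hm1
  have hfac : Nat.factorial (n + m - 2) =
      Nat.factorial (m-1) * ∏ k ∈ Finset.range (n-1), (m + k) := by
    have h1 : n + m - 2 = (m-1) + (n-1) := by omega
    rw [h1, fact_prod_aux]
    congr 1
    refine Finset.prod_congr rfl (fun k _ => ?_)
    omega
  have hprod : (∏ k ∈ Finset.range (n-1), (1/2 + (k:ℝ)/(2*(m:ℝ)))) =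
      (∏ k ∈ Finset.range (n-1), ((m:ℝ) + k)) / (2*(m:ℝ))^(n-1) := by
    have h : ∀ k ∈ Finset.range (n-1),
        (1/2 + (k:ℝ)/(2*(m:ℝ))) = ((m:ℝ)+k)/(2*(m:ℝ)) := by
      intro k _
      field_simp
    rw [Finset.prod_congr rfl h, Finset.prod_div_distrib, Finset.prod_const,
      Finset.card_range]
  have hpow : (2:ℝ)^(n*j) = (2*(m:ℝ))^n := by
    rw [mul_comm n j, pow_mul]
    congr 1
    exact_mod_cast congrArg (Nat.cast (R := ℝ)) h2j
  have h2m : (2*(m:ℝ)) ≠ 0 := by positivity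
  have hfn : (Nat.factorial n : ℝ) ≠ 0 := by positivity
  have hf1 : (Nat.factorial (m-1) : ℝ) ≠ 0 := by positivity
  have hpm : (2*(m:ℝ))^(n-1) ≠ 0 := by positivity
  have hsplit : (2*(m:ℝ))^n = (2*(m:ℝ)) * (2*(m:ℝ))^(n-1) := by
    rw [← pow_succ']
    congr 1
    omega
  have key : (((n + 2 ^ j - 2) * Nat.factorial (n + 2 ^ (j - 1) - 2) : ℕ) : ℝ) /
      ((2 : ℝ) ^ (n * j) * (Nat.factorial n : ℝ) * (Nat.factorial (2 ^ (j - 1) - 1) : ℝ))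
      = (((n:ℝ)+2*m-2) * ∏ k ∈ Finset.range (n-1), ((m:ℝ)+k)) /
        ((2*(m:ℝ))^n * (Nat.factorial n : ℝ)) := by
    have h1 : n + 2^j - 2 = n + 2*m - 2 := by rw [h2j]
    rw [h1, show (n + 2^(j-1) - 2) = n + m - 2 from rfl, hfac, hpow]
    push_cast [Nat.cast_sub (show 2 ≤ n + 2*m by omega)]
    field_simp
    ring
  have key2 : g m = (((n:ℝ)+2*m-2) * ∏ k ∈ Finset.range (n-1), ((m:ℝ)+k)) /
      ((2*(m:ℝ))^n * (Nat.factorial n : ℝ)) := by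
    have hfirst : 1 + ((n:ℝ)-2)/(2*(m:ℝ)) = ((n:ℝ)+2*m-2)/(2*(m:ℝ)) := by
      field_simp
      ring
    rw [hg]
    simp only
    rw [hprod, hfirst, hsplit, div_mul_div_comm, div_div]
  simp only [Function.comp]
  rw [key, ← hm, key2]
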